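/- Let (T, T^p, 𝒮) be a (-d)-Calabi–Yau triple with 𝒮 = add(S). Then Hom_{T/T^p}(Σ^j S, S) = 0 for all integers j with 1 ≤ j ≤ d. -/

import Mathlib

open CategoryTheory Category Limits Pretriangulated
open scoped Classical

universe v u

variable (k : Type) [Field k]
variable (T : Type u) [Category.{v} T] [Preadditive T] [Linear k T] [HasZeroObject T]
  [HasShift T ℤ] [∀ n : ℤ, (shiftFunctor T n).Additive] [Pretriangulated T]
  [HasFiniteBiproducts T]

/-- `T_{>i} = ⊥(Σ^{>-i-1}𝒮)`. -/
def Tgt (𝒮 : Set T) (i : ℤ) : Set T :=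
  {X | ∀ (j : ℤ), j > -i - 1 → ∀ s ∈ 𝒮, ∀ f : X ⟶ s⟦j⟧, f = 0}

/-- `T_{≤i} = ⊥(Σ^{<-i}𝒮)`. -/
def Tle (𝒮 : Set T) (i : ℤ) : Set T :=
  {X | ∀ (j : ℤ), j < -i → ∀ s ∈ 𝒮, ∀ f : X ⟶ s⟦j⟧, f = 0}

/-- `(Σ^{≥0}𝒮)^⊥`. -/
def perpGE (𝒮 : Set T) : Set T :=
  {X | ∀ (j : ℤ), 0 ≤ j → ∀ s ∈ 𝒮, ∀ f : s⟦j⟧ ⟶ X, f = 0}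

/-- `(Σ^{<0}𝒮)^⊥`. -/
def perpLT (𝒮 : Set T) : Set T :=
  {X | ∀ (j : ℤ), j < 0 → ∀ s ∈ 𝒮, ∀ f : s⟦j⟧ ⟶ X, f = 0}

/-- A torsion pair `(𝒳, 𝒴)` on a triangulated category. -/
structure IsTorsionPair (𝒳 𝒴 : Set T) : Prop where
  orth : ∀ X ∈ 𝒳, ∀ Y ∈ 𝒴, ∀ f : X ⟶ Y, f = 0
  tri : ∀ A : T, ∃ (X Y : T) (_ : X ∈ 𝒳) (_ : Y ∈ 𝒴)
    (f : X ⟶ A) (g : A ⟶ Y) (h : Y ⟶ X⟦(1 : ℤ)⟧),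
    Triangle.mk f g h ∈ distTriang T

namespace Triangulated

/-- A triangulated subcategory (as in Mathlib of December 2024). -/
structure Subcategory where
  P : T → Prop
  zero' : ∃ (Z : T) (_ : IsZero Z), P Z
  shift (X : T) (n : ℤ) : P X → P (X⟦n⟧)
  ext₂' (Tr : Triangle T) (_ : Tr ∈ distTriang T) : P Tr.obj₁ → P Tr.obj₃ →
    ObjectProperty.isoClosure P Tr.obj₂

variable {T} in
/-- The class of morphisms whose cone is in `S.P`. -/
def Subcategory.W (S : Subcategory T) : MorphismProperty T := fun X Y f =>
  ∃ (Z : T) (g : Y ⟶ Z) (h : Z ⟶ X⟦(1 : ℤ)⟧) (_ : Triangle.mk f g h ∈ distTriang T), S.P Z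

end Triangulated

/-- A triangulated subcategory is thick if it is closed under retracts (direct summands). -/
def IsThick (Q : Triangulated.Subcategory T) : Prop :=
  ∀ X Y : T, (∃ (r : X ⟶ Y) (s : Y ⟶ X), s ≫ r = 𝟙 Y) → Q.P X → Q.P Y

/-- A `(-d)`-Calabi–Yau triple `(T, T^p, 𝒮)` with `𝒮 = add S`: `T` is a `k`-linear,
Hom-finite, Krull–Schmidt (idempotent complete) triangulated category, `T^p` a thick
subcategory with a bifunctorial Serre duality `D Hom(X, Y) ≅ Hom(Y, Σ^{-d} X)` for
`X ∈ T^p`, and `S` the additive generator of a simple minded collection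
`𝒮 = {S₁, …, Sₘ}` inducing the two co-t-structures of (RS2), with
`⊥(Σ^{≥0}𝒮) ⊆ T^p` and `(Σ^{<0}𝒮)^⊥ ⊆ T^p`. -/
structure CYTriple (d : ℕ) where
  homFin : ∀ X Y : T, FiniteDimensional k (X ⟶ Y)
  idem : IsIdempotentComplete T
  P : Triangulated.Subcategory T
  thick : IsThick T P
  serre : ∀ (X Y : T), P.P X → (((X ⟶ Y) →ₗ[k] k) ≃ₗ[k] (Y ⟶ X⟦(-(d : ℤ))⟧))
  serre_natY : ∀ (X Y Y' : T) (hX : P.P X) (g : Y ⟶ Y') (φ : (X ⟶ Y') →ₗ[k] k),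
    serre X Y hX (φ.comp (Linear.rightComp k X g)) = g ≫ serre X Y' hX φ
  serre_natX : ∀ (X X' Y : T) (hX : P.P X) (hX' : P.P X') (u : X ⟶ X')
    (φ : (X ⟶ Y) →ₗ[k] k),
    serre X' Y hX' (φ.comp (Linear.leftComp k Y u)) =
      serre X Y hX φ ≫ (shiftFunctor T (-(d : ℤ))).map u
  S : T
  m : ℕ
  Si : Fin m → T
  decomp : S ≅ ⨁ Si
  indec : ∀ i, ¬ IsZero (Si i) ∧ ∀ (A B : T), (Si i ≅ A ⊞ B) → IsZero A ∨ IsZero B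
  smc_orth : ∀ (j : ℤ), j < 0 → ∀ f : S ⟶ S⟦j⟧, f = 0
  smc_dim : ∀ i j, Module.finrank k (Si i ⟶ Si j) = if i = j then 1 else 0
  smc_gen : ∀ Q : Triangulated.Subcategory T, IsThick T Q → Q.P S → ∀ X, Q.P X
  cot1 : IsTorsionPair T (Tgt T {S} 0) (Tle T {S} 0)
  cot2 : IsTorsionPair T (perpGE T {S}) (perpLT T {S})
  incl1 : Tgt T {S} 0 ⊆ P.P
  incl2 : perpLT T {S} ⊆ P.P

namespace CYProof

variable {k : Type} [Field k] {T : Type u} [Category.{v} T] [Preadditive T] [Linear k T]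
  [HasZeroObject T] [HasShift T ℤ] [∀ n : ℤ, (shiftFunctor T n).Additive] [Pretriangulated T]
  [HasFiniteBiproducts T]

lemma _root_.Triangulated.Subcategory.ext₃ (S : Triangulated.Subcategory T)
    [ObjectProperty.IsClosedUnderIsomorphisms S.P] (Tr : Triangle T)
    (hT : Tr ∈ distTriang T) (h₁ : S.P Tr.obj₁) (h₂ : S.P Tr.obj₂) : S.P Tr.obj₃ := by
  obtain ⟨Y, hY, ⟨e⟩⟩ := S.ext₂' _ (rot_of_distTriang _ hT) h₂ (S.shift _ 1 h₁)
  exact ObjectProperty.prop_of_iso S.P e.symm hY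

lemma _root_.Triangulated.Subcategory.W.mk (S : Triangulated.Subcategory T) {Tr : Triangle T}
    (hT : Tr ∈ distTriang T) (h : S.P Tr.obj₃) : S.W Tr.mor₁ :=
  ⟨_, _, _, hT, h⟩

lemma _root_.Triangulated.Subcategory.W.mk' (S : Triangulated.Subcategory T) {Tr : Triangle T}
    (hT : Tr ∈ distTriang T) (h : S.P Tr.obj₁) : S.W Tr.mor₂ :=
  ⟨_, _, _, rot_of_distTriang _ hT, S.shift _ 1 h⟩

/-- Finite chains of morphisms in `W`. -/
inductive WChain (W : MorphismProperty T) : ∀ {X Y : T}, (X ⟶ Y) → Prop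
  | nil (X : T) : WChain W (𝟙 X)
  | snoc {X M Y : T} {c : X ⟶ M} {s : M ⟶ Y} (hc : WChain W c) (hs : W s) : WChain W (c ≫ s)

lemma WChain.single {W : MorphismProperty T} {X Y : T} {s : X ⟶ Y} (hs : W s) :
    WChain W s := by
  simpa using (WChain.nil X).snoc hs

lemma WChain.concat {W : MorphismProperty T} {Y Z : T} {g : Y ⟶ Z} (hg : WChain W g) :
    ∀ {X : T} {f : X ⟶ Y}, WChain W f → WChain W (f ≫ g) := by
  induction hg with
  | nil => intro X f hf; simpa using hf
  | snoc hc hs ih =>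
      intro X f hf
      rw [← Category.assoc]
      exact (ih hf).snoc hs

/-- The multiplicative closure of `W`. -/
def wm (W : MorphismProperty T) : MorphismProperty T := fun _ _ f => WChain W f

instance (W : MorphismProperty T) : (wm W).IsMultiplicative where
  id_mem X := WChain.nil X
  comp_mem _ _ hf hg := WChain.concat hg hf

section Main

variable (d : ℕ) (E : CYTriple k T d)

lemma pIsoClosed : ObjectProperty.IsClosedUnderIsomorphisms E.P.P :=
  ⟨fun {X Y} e hX => E.thick X Y ⟨e.hom, e.inv, e.inv_hom_id⟩ hX⟩

/-- Vanishing of morphisms from shifts, deduced from eventual vanishing into shifts of `S`. -/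
lemma van {B : T} (hB : ∀ (m : ℤ), m < 0 → ∀ g : B ⟶ E.S⟦m⟧, g = 0)
    (n m : ℤ) (hmn : m < n) (f : B⟦n⟧ ⟶ E.S⟦m⟧) : f = 0 := by
  have key : (shiftFunctorCompIsoId T n (-n) (by omega)).inv.app B ≫
      ((shiftFunctor T (-n)).map f ≫
      (shiftFunctorAdd' T m (-n) (m - n) (by omega)).inv.app E.S) = 0 :=
    hB (m - n) (by omega) _
  apply (shiftFunctor T (-n)).map_injective
  rw [Functor.map_zero]
  rw [← cancel_epi ((shiftFunctorCompIsoId T n (-n) (by omega)).inv.app B),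
      ← cancel_mono ((shiftFunctorAdd' T m (-n) (m - n) (by omega)).inv.app E.S)]
  simpa only [Category.assoc, zero_comp, comp_zero] using key

lemma hom_shift_S_S {n : ℤ} (hn : 1 ≤ n) (f : E.S⟦n⟧ ⟶ E.S) : f = 0 := by
  have h0 : f ≫ (shiftFunctorZero T ℤ).inv.app E.S = 0 :=
    van d E E.smc_orth n 0 (by omega) _
  calc f = (f ≫ (shiftFunctorZero T ℤ).inv.app E.S) ≫ (shiftFunctorZero T ℤ).hom.app E.S := by
        simp
    _ = 0 := by rw [h0, zero_comp]

lemma tle_van {B : T} (hB : B ∈ Tle T {E.S} 0) :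
    ∀ (m : ℤ), m < 0 → ∀ g : B ⟶ E.S⟦m⟧, g = 0 :=
  fun m hm g => hB m (by omega) E.S rfl g

lemma tgt_van {A : T} (hA : A ∈ Tgt T {E.S} 0) :
    ∀ (m : ℤ), -1 < m → ∀ g : A ⟶ E.S⟦m⟧, g = 0 :=
  fun m hm g => hA m (by omega) E.S rfl g

lemma tgt_hom_S_zero {A : T} (hA : A ∈ Tgt T {E.S} 0) (f : A ⟶ E.S) : f = 0 := by
  have h0 : f ≫ (shiftFunctorZero T ℤ).inv.app E.S = 0 :=
    tgt_van d E hA 0 (by omega) _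
  calc f = (f ≫ (shiftFunctorZero T ℤ).inv.app E.S) ≫ (shiftFunctorZero T ℤ).hom.app E.S := by
        simp
    _ = 0 := by rw [h0, zero_comp]

lemma tle_shift_one {B : T} (hB : B ∈ Tle T {E.S} 0) : B⟦(1 : ℤ)⟧ ∈ Tle T {E.S} 0 := by
  intro m hm s hs f
  rcases hs with rfl
  exact van d E (tle_van d E hB) 1 m (by omega) f

/-- The key Serre-duality vanishing: for `B ∈ T^p ∩ T_{≤0}` and `1 ≤ j ≤ d`,
`Hom(S⟦j⟧, B⟦1⟧) = 0`. -/
lemma serre_kill (j : ℤ) (h1 : 1 ≤ j) (h2 : j ≤ (d : ℤ)) {B : T} (hBP : E.P.P B)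
    (hB : ∀ (m : ℤ), m < 0 → ∀ g : B ⟶ E.S⟦m⟧, g = 0)
    (z : E.S⟦j⟧ ⟶ B⟦(1 : ℤ)⟧) : z = 0 := by
  have allzero : ∀ f : B⟦(d : ℤ) + 1⟧ ⟶ E.S⟦j⟧, f = 0 :=
    van d E hB ((d : ℤ) + 1) j (by omega)
  have hP : E.P.P (B⟦(d : ℤ) + 1⟧) := E.P.shift B _ hBP
  set σ := E.serre (B⟦(d : ℤ) + 1⟧) (E.S⟦j⟧) hP with hσ
  have hzero : ∀ y : (E.S⟦j⟧ ⟶ (B⟦(d : ℤ) + 1⟧)⟦-(d : ℤ)⟧), y = 0 := by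
    intro y
    have hφ : σ.symm y = 0 := by
      apply LinearMap.ext
      intro x
      rw [allzero x, map_zero]
      rfl
    calc y = σ (σ.symm y) := (σ.apply_symm_apply y).symm
      _ = σ 0 := by rw [hφ]
      _ = 0 := map_zero σ
  have h0 : z ≫ (shiftFunctorAdd' T ((d : ℤ) + 1) (-(d : ℤ)) 1 (by omega)).hom.app B = 0 :=
    hzero _
  calc z = (z ≫ (shiftFunctorAdd' T ((d : ℤ) + 1) (-(d : ℤ)) 1 (by omega)).hom.app B) ≫
        (shiftFunctorAdd' T ((d : ℤ) + 1) (-(d : ℤ)) 1 (by omega)).inv.app B := by simp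
    _ = 0 := by rw [h0, zero_comp]

/-- Towers over `S`: iterated extensions whose "cones" are of the form `B⟦1⟧` with
`B ∈ T^p ∩ T_{≤0}`. -/
inductive IsTower (P : Triangulated.Subcategory T) (S : T) : ∀ {M : T}, (S ⟶ M) → Prop
  | base : IsTower P S (𝟙 S)
  | step {M Z B : T} {c : S ⟶ M} (hc : IsTower P S c) (hBP : P.P B) (hBle : B ∈ Tle T {S} 0)
      (u : M ⟶ Z) (p : Z ⟶ B⟦(1 : ℤ)⟧) (q : B⟦(1 : ℤ)⟧ ⟶ M⟦(1 : ℤ)⟧)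
      (hd : Triangle.mk u p q ∈ distTriang T) : IsTower P S (c ≫ u)

lemma tower_hom_from_shift (j : ℤ) (h1 : 1 ≤ j) (h2 : j ≤ (d : ℤ)) :
    ∀ {M : T} {c : E.S ⟶ M}, IsTower E.P E.S c → ∀ a : E.S⟦j⟧ ⟶ M, a = 0 := by
  intro M c hc
  induction hc with
  | base => intro a; exact hom_shift_S_S d E h1 a
  | step hc hBP hBle u p q hd ih =>
      intro a
      have h0 : a ≫ p = 0 := serre_kill d E j h1 h2 hBP (tle_van d E hBle) (a ≫ p)
      obtain ⟨b, hb⟩ := Triangle.coyoneda_exact₂ _ hd a h0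
      rw [hb, ih b]; exact zero_comp

lemma tower_hom_tgt :
    ∀ {M : T} {c : E.S ⟶ M}, IsTower E.P E.S c →
      ∀ {A : T}, A ∈ Tgt T {E.S} 0 → ∀ f : A ⟶ M, f = 0 := by
  intro M c hc
  induction hc with
  | base => intro A hA f; exact tgt_hom_S_zero d E hA f
  | step hc hBP hBle u p q hd ih =>
      intro A hA f
      have h0 : f ≫ p = 0 := E.cot1.orth A hA _ (tle_shift_one d E hBle) (f ≫ p)
      obtain ⟨b, hb⟩ := Triangle.coyoneda_exact₂ _ hd f h0
      rw [hb, ih hA b]; exact zero_comp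

/-- One-step refinement: any morphism of `W` out of a towered object can be completed to a
tower extension. -/
lemma step_refine {M Y : T} {s : M ⟶ Y} (hs : E.P.W s) {c : E.S ⟶ M}
    (hc : IsTower E.P E.S c) :
    ∃ (Z : T) (w : Y ⟶ Z), IsTower E.P E.S (c ≫ (s ≫ w)) ∧ E.P.W (s ≫ w) := by
  haveI := pIsoClosed d E
  obtain ⟨N, g, h, hT0, hN⟩ := hs
  obtain ⟨ε₀, δ₀, hT1⟩ : ∃ (ε₀ : N⟦(-1 : ℤ)⟧ ⟶ M) (δ₀ : Y ⟶ (N⟦(-1 : ℤ)⟧)⟦(1 : ℤ)⟧),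
      Triangle.mk ε₀ s δ₀ ∈ distTriang T := ⟨_, _, inv_rot_of_distTriang _ hT0⟩
  obtain ⟨A, B, hA, hB, fA, qB, hAB, hT2⟩ := E.cot1.tri (N⟦(-1 : ℤ)⟧)
  have hfa : fA ≫ ε₀ = 0 := tower_hom_tgt d E hc hA _
  obtain ⟨ε', hε'⟩ := Triangle.yoneda_exact₂ _ hT2 ε₀ hfa
  obtain ⟨Z, u₃, p₃, hT3⟩ := distinguished_cocone_triangle ε'
  obtain ⟨(w : Y ⟶ Z), hw₁, hw₂⟩ := complete_distinguished_triangle_morphism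
    (Triangle.mk ε₀ s δ₀) (Triangle.mk ε' u₃ p₃) hT1 hT3 qB (𝟙 M)
    (by exact (comp_id ε₀).trans hε')
  have hBP : E.P.P B :=
    E.P.ext₃ (Triangle.mk fA qB hAB) hT2 (E.incl1 hA) (E.P.shift N (-1) hN)
  have hsw : s ≫ w = u₃ := by exact hw₁.trans (id_comp _)
  refine ⟨Z, w, ?_, ?_⟩
  · rw [hsw]
    exact hc.step hBP hB u₃ p₃ _ (rot_of_distTriang _ hT3)
  · rw [hsw]
    exact Triangulated.Subcategory.W.mk' E.P hT3 hBP

/-- Left Ore condition for `E.P.W` (valid in any pretriangulated category). -/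
lemma ore_single {M Y : T} {s : M ⟶ Y} (hs : E.P.W s) {C' : T} (f : M ⟶ C') :
    ∃ (D' : T) (f' : Y ⟶ D') (s' : C' ⟶ D'), E.P.W s' ∧ s ≫ f' = f ≫ s' := by
  obtain ⟨N, g, h, hT, hN⟩ := hs
  obtain ⟨D', s', g', hT'⟩ := distinguished_cocone_triangle₂ (h ≫ f⟦(1 : ℤ)⟧')
  obtain ⟨b, hb₁, hb₂⟩ := complete_distinguished_triangle_morphism₂
    (Triangle.mk s g h) (Triangle.mk s' g' (h ≫ f⟦(1 : ℤ)⟧')) hT hT' f (𝟙 N)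
    (by exact (id_comp _).symm)
  exact ⟨D', b, s', Triangulated.Subcategory.W.mk E.P hT' hN, hb₁⟩

lemma ext_single {X Y M : T} {s : M ⟶ X} (hs : E.P.W s) (f₁ f₂ : X ⟶ Y)
    (hf : s ≫ f₁ = s ≫ f₂) :
    ∃ (Y' : T) (t : Y ⟶ Y'), E.P.W t ∧ f₁ ≫ t = f₂ ≫ t := by
  obtain ⟨N, g, h, hT, hN⟩ := hs
  have hf2 : s ≫ (f₁ - f₂) = 0 := by rw [Preadditive.comp_sub, hf, sub_self]
  obtain ⟨q, hq⟩ := Triangle.yoneda_exact₂ _ hT (f₁ - f₂) hf2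
  obtain ⟨Y', r, t', hT'⟩ := distinguished_cocone_triangle q
  refine ⟨Y', r, Triangulated.Subcategory.W.mk E.P (rot_of_distTriang _ hT')
    (E.P.shift N 1 hN), ?_⟩
  have hqr : q ≫ r = 0 := comp_distTriang_mor_zero₁₂ _ hT'
  rw [← sub_eq_zero, ← Preadditive.sub_comp, hq]; exact (Category.assoc g q r).trans ((congrArg (fun x => g ≫ x) hqr).trans comp_zero)

lemma ore_chain {A B : T} {s : A ⟶ B} (hs : WChain E.P.W s) :
    ∀ {C' : T} (f : A ⟶ C'),
      ∃ (D' : T) (f' : B ⟶ D') (s' : C' ⟶ D'), WChain E.P.W s' ∧ s ≫ f' = f ≫ s' := by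
  induction hs with
  | nil => intro C' f; exact ⟨C', f, 𝟙 C', WChain.nil C', by simp⟩
  | snoc hcc hss ih =>
      intro C' f
      obtain ⟨D₀, f'₀, s'₀, hch, h₀⟩ := ih f
      obtain ⟨D₁, f₁, s₁', hW₁, hcomm₁⟩ := ore_single d E hss f'₀
      exact ⟨D₁, f₁, s'₀ ≫ s₁', hch.snoc hW₁, by
        rw [Category.assoc, hcomm₁, ← Category.assoc, h₀, Category.assoc]⟩

lemma ext_chain {M X : T} {s : M ⟶ X} (hs : WChain E.P.W s) :
    ∀ {Y : T} (f₁ f₂ : X ⟶ Y), s ≫ f₁ = s ≫ f₂ →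
      ∃ (Y' : T) (t : Y ⟶ Y'), WChain E.P.W t ∧ f₁ ≫ t = f₂ ≫ t := by
  induction hs with
  | nil => intro Y f₁ f₂ hf; exact ⟨Y, 𝟙 Y, WChain.nil Y, by simpa using hf⟩
  | snoc hcc hss ih =>
      intro Y f₁ f₂ hf
      rw [Category.assoc, Category.assoc] at hf
      obtain ⟨Y₁, t₁, hch₁, ht₁⟩ := ih _ _ hf
      rw [Category.assoc, Category.assoc] at ht₁
      obtain ⟨Y₂, t₂, hW₂, ht₂⟩ := ext_single d E hss _ _ ht₁
      exact ⟨Y₂, t₁ ≫ t₂, hch₁.snoc hW₂, by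
        rw [← Category.assoc, ← Category.assoc]; exact ht₂⟩

lemma wm_hasLeftCalculus : (wm E.P.W).HasLeftCalculusOfFractions where
  exists_leftFraction X Y φ := by
    obtain ⟨D', f', s', hch, heq⟩ := ore_chain d E φ.hs φ.f
    exact ⟨MorphismProperty.LeftFraction.mk f' s' hch, heq.symm⟩
  ext X' X Y f₁ f₂ s hs hf := by
    obtain ⟨Y', t, hch, ht⟩ := ext_chain d E hs f₁ f₂ hf
    exact ⟨Y', t, hch, ht⟩

/-- The chain refinement lemma: any `W`-chain out of a towered object can be refined to a
tower. -/
lemma chain_refine {Z₁ Z₂ : T} {u : Z₁ ⟶ Z₂} (hu : WChain E.P.W u) :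
    ∀ {c : E.S ⟶ Z₁}, IsTower E.P E.S c →
      ∃ (Z₃ : T) (w : Z₂ ⟶ Z₃), IsTower E.P E.S (c ≫ (u ≫ w)) ∧ WChain E.P.W (u ≫ w) := by
  induction hu with
  | nil =>
      intro c hc
      exact ⟨_, 𝟙 _, by simpa using hc, by simpa using WChain.nil _⟩
  | snoc hcc hs ih =>
      intro c hc
      obtain ⟨Z₃, w', ht', hch'⟩ := ih hc
      obtain ⟨D', f', s', hs', hore⟩ := ore_single d E hs w'
      obtain ⟨Z₅, w₂, ht₂, hW₂⟩ := step_refine d E hs' ht'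
      refine ⟨Z₅, f' ≫ w₂, ?_, ?_⟩
      · simp only [Category.assoc]
        rw [reassoc_of% hore]
        simpa only [Category.assoc] using ht₂
      · simp only [Category.assoc]
        rw [reassoc_of% hore]
        simpa only [Category.assoc] using WChain.concat (WChain.single hW₂) hch'

section Loc

variable {D : Type u} [Category.{v} D] (Q : T ⥤ D) [Q.IsLocalization E.P.W]

lemma wm_inverted {D' : Type*} [Category D'] (L : T ⥤ D') (hL : E.P.W.IsInvertedBy L) :
    (wm E.P.W).IsInvertedBy L := by
  intro X Y f hf
  induction hf with
  | nil => rw [L.map_id]; infer_instance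
  | snoc hc hs ih =>
      rw [L.map_comp]
      haveI := ih
      haveI := hL _ hs
      infer_instance

lemma qm_isLocalization : Q.IsLocalization (wm E.P.W) := by
  have hQW : E.P.W.IsInvertedBy Q := Localization.inverts Q E.P.W
  have hQWm : (wm E.P.W).IsInvertedBy Q := wm_inverted d E Q hQW
  let F : E.P.W.Localization ⥤ (wm E.P.W).Localization :=
    Localization.Construction.lift (wm E.P.W).Q
      (fun X Y f hf => (wm E.P.W).Q_inverts f (WChain.single hf))
  let F' : (wm E.P.W).Localization ⥤ E.P.W.Localization :=
    Localization.Construction.lift E.P.W.Q (wm_inverted d E E.P.W.Q E.P.W.Q_inverts)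
  have hFF' : F ⋙ F' = 𝟭 _ := Localization.Construction.uniq _ _ (by
    rw [← Functor.assoc]
    exact (congrArg (· ⋙ F') (Localization.Construction.fac _ _)).trans
      ((Localization.Construction.fac _ _).trans (Functor.comp_id _).symm))
  have hF'F : F' ⋙ F = 𝟭 _ := Localization.Construction.uniq _ _ (by
    rw [← Functor.assoc]
    exact (congrArg (· ⋙ F) (Localization.Construction.fac _ _)).trans
      ((Localization.Construction.fac _ _).trans (Functor.comp_id _).symm))
  let G := Localization.Construction.lift Q hQW
  let Gm := Localization.Construction.lift Q hQWm
  have hFG : F ⋙ Gm = G := Localization.Construction.uniq _ _ (by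
    rw [← Functor.assoc]
    exact (congrArg (· ⋙ Gm) (Localization.Construction.fac _ _)).trans
      ((Localization.Construction.fac _ _).trans (Localization.Construction.fac _ _).symm))
  haveI hG : G.IsEquivalence := Functor.IsLocalization.isEquivalence
  haveI hF' : F'.IsEquivalence :=
    Functor.IsEquivalence.mk' F (eqToIso hF'F.symm) (eqToIso hFF')
  have hGm : Gm = F' ⋙ G := by
    rw [← hFG, ← Functor.assoc, hF'F, Functor.id_comp]
  refine ⟨hQWm, ?_⟩
  show Gm.IsEquivalence
  rw [hGm]
  infer_instance

end Loc

end Main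

end CYProof

/-- Let `(T, T^p, 𝒮)` be a `(-d)`-Calabi–Yau triple with `𝒮 = add S` and let
`Q : T ⥤ T/T^p` be the Verdier quotient functor.  Then
`Hom_{T/T^p}(Σ^j S, S) = 0` for all integers `j` with `1 ≤ j ≤ d`. -/
theorem stmt10 {D : Type u} [Category.{v} D] [Preadditive D] [Linear k D]
    (d : ℕ) (E : CYTriple k T d)
    (Q : T ⥤ D) [Q.Additive] [Q.Linear k] [Q.IsLocalization E.P.W]
    (j : ℤ) (h1 : 1 ≤ j) (h2 : j ≤ d) :
    ∀ φ : Q.obj (E.S⟦j⟧) ⟶ Q.obj E.S, φ = 0 := by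
  intro φ
  haveI : Q.IsLocalization (CYProof.wm E.P.W) := CYProof.qm_isLocalization d E Q
  haveI : (CYProof.wm E.P.W).HasLeftCalculusOfFractions := CYProof.wm_hasLeftCalculus d E
  obtain ⟨ψ, hψ⟩ := Localization.exists_leftFraction Q (CYProof.wm E.P.W) φ
  obtain ⟨Z₃, w, htower, hchain⟩ := CYProof.chain_refine d E ψ.hs CYProof.IsTower.base
  have hzero : ψ.f ≫ w = 0 :=
    CYProof.tower_hom_from_shift d E j h1 h2 htower (ψ.f ≫ w)
  haveI hQs : IsIso (Q.map ψ.s) :=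
    CYProof.wm_inverted d E Q (Localization.inverts Q E.P.W) ψ.s ψ.hs
  haveI hQsw : IsIso (Q.map (ψ.s ≫ w)) :=
    CYProof.wm_inverted d E Q (Localization.inverts Q E.P.W) _ hchain
  haveI hQw : IsIso (Q.map w) := by
    rw [Q.map_comp] at hQsw
    exact IsIso.of_isIso_comp_left (Q.map ψ.s) (Q.map w)
  have hQf : Q.map ψ.f = 0 := by
    rw [← cancel_mono (Q.map w), zero_comp, ← Q.map_comp, hzero, Q.map_zero]
  rw [hψ, ← cancel_mono (Q.map ψ.s),
    MorphismProperty.LeftFraction.map_comp_map_s, hQf, zero_comp]
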